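/- arXiv:1303.3157 — 2 statements merged into one kernel-verified Lean document; each statement's English description precedes it below -/
import Mathlib

section
/- Let G be a group, M a commutative monoid, φ a filter on G, and s, t ∈ M with s ≠ 0 and t ≠ 0. Then: (a) if x, x' ∈ φ_s with x⁻¹x' ∈ φ_s⁺ and y, y' ∈ φ_t with y⁻¹y' ∈ φ_t⁺, then [x,y]⁻¹[x',y'] ∈ φ_{s+t}⁺; (b) for all x, x' ∈ φ_s and y ∈ φ_t, [xx', y]⁻¹ · ([x,y][x',y]) ∈ φ_{s+t}⁺, and for all x ∈ φ_s and y, y' ∈ φ_t, [x, yy']⁻¹ · ([x,y][x,y']) ∈ φ_{s+t}⁺. In particular, the commutator induces a well-defined biadditive map from (φ_s/φ_s⁺) × (φ_t/φ_t⁺) to φ_{s+t}/φ_{s+t}⁺. -/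
/-- `φ_s⁺`, the subgroup generated by all `φ (s + t)` with `t ≠ 0`. -/
def filterPlus {M : Type*} [AddCommMonoid M] {G : Type*} [Group G]
    (φ : M → Subgroup G) (s : M) : Subgroup G :=
  ⨆ t ∈ {t : M | t ≠ 0}, φ (s + t)

/-- A filter on `G` over the commutative monoid `M`. -/
def IsFilter {M : Type*} [AddCommMonoid M] {G : Type*} [Group G]
    (φ : M → Subgroup G) : Prop :=
  φ 0 = ⊤ ∧ ∀ s t : M, ⁅φ s, φ t⁆ ≤ φ (s + t) ∧ φ (s + t) ≤ φ s ⊓ φ t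

/-- The commutator `[x,y] = x⁻¹y⁻¹xy` (the convention used in the paper). -/
def pcomm {G : Type*} [Group G] (x y : G) : G := x⁻¹ * y⁻¹ * x * y


section aux
variable {M : Type*} [AddCommMonoid M] {G : Type*} [Group G]
  {φ : M → Subgroup G}

lemma pcomm_inv (x y : G) : (pcomm x y)⁻¹ = pcomm y x := by
  unfold pcomm; group

lemma pcomm_one (y : G) : pcomm 1 y = 1 := by unfold pcomm; group

lemma le_filterPlus (φ : M → Subgroup G) {s u : M} (hu : u ≠ 0) :
    φ (s + u) ≤ filterPlus φ s :=
  le_iSup₂ (f := fun (t : M) (_ : t ∈ {t : M | t ≠ 0}) => φ (s + t)) u hu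

open scoped commutatorElement in
lemma pcomm_mem (hφ : IsFilter φ) {a b : M} {x y : G}
    (hx : x ∈ φ a) (hy : y ∈ φ b) : pcomm x y ∈ φ (a + b) := by
  have h : pcomm x y = ⁅x⁻¹, y⁻¹⁆ := by
    unfold pcomm commutatorElement; group
  rw [h]
  exact (hφ.2 a b).1 (Subgroup.commutator_mem_commutator (inv_mem hx) (inv_mem hy))

lemma filterPlus_le (hφ : IsFilter φ) (s : M) : filterPlus φ s ≤ φ s :=
  iSup₂_le fun u _ => le_trans (hφ.2 s u).2 inf_le_left

lemma filterPlus_normal (hφ : IsFilter φ) (s : M) : (filterPlus φ s).Normal := by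
  constructor
  intro n hn g
  rw [filterPlus, iSup_subtype'] at hn
  refine Subgroup.iSup_induction (C := fun n => g * n * g⁻¹ ∈ filterPlus φ s)
    _ hn (fun u x hx => ?_) (by simpa using one_mem _) (fun x y hx hy => ?_)
  · have h1 : g⁻¹ ∈ φ 0 := by rw [hφ.1]; trivial
    have h2 : g * x * g⁻¹ = x * pcomm x g⁻¹ := by unfold pcomm; group
    show g * x * g⁻¹ ∈ filterPlus φ s
    rw [h2]
    refine le_filterPlus φ u.2 (mul_mem hx ?_)
    have := pcomm_mem hφ hx h1
    rwa [add_zero] at this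
  · show g * (x * y) * g⁻¹ ∈ filterPlus φ s
    have h : g * (x * y) * g⁻¹ = (g * x * g⁻¹) * (g * y * g⁻¹) := by group
    rw [h]; exact mul_mem hx hy

lemma pcomm_mul_left (a b y : G) :
    pcomm (a * b) y = b⁻¹ * pcomm a y * b * pcomm b y := by
  unfold pcomm; group

lemma comm_left_mem (hφ : IsFilter φ) {s t : M} {a y : G}
    (ha : a ∈ filterPlus φ s) (hy : y ∈ φ t) :
    pcomm a y ∈ filterPlus φ (s + t) := by
  have hN := filterPlus_normal hφ (s + t)
  rw [filterPlus, iSup_subtype'] at ha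
  refine Subgroup.iSup_induction (C := fun a => pcomm a y ∈ filterPlus φ (s + t))
    _ ha (fun u x hx => ?_) (by show pcomm 1 y ∈ _; rw [pcomm_one]; exact one_mem _) (fun x z hx hz => ?_)
  · have h : pcomm x y ∈ φ (s + ↑u + t) := pcomm_mem hφ hx hy
    rw [add_right_comm] at h
    exact le_filterPlus φ u.2 h
  · show pcomm (x * z) y ∈ filterPlus φ (s + t)
    rw [pcomm_mul_left]
    exact mul_mem (by simpa [mul_assoc] using hN.conj_mem _ hx z⁻¹) hz

lemma comm_right_mem (hφ : IsFilter φ) {s t : M} {x b : G}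
    (hx : x ∈ φ s) (hb : b ∈ filterPlus φ t) :
    pcomm x b ∈ filterPlus φ (s + t) := by
  rw [← pcomm_inv, add_comm]
  exact inv_mem (comm_left_mem hφ hb hx)

end aux

/-- (a) well-definedness and (b) biadditivity of the commutator map
`φ_s/φ_s⁺ × φ_t/φ_t⁺ → φ_{s+t}/φ_{s+t}⁺`. -/
theorem statement2 {G : Type*} [Group G] {M : Type*} [AddCommMonoid M]
    (φ : M → Subgroup G) (hφ : IsFilter φ) (s t : M) (hs : s ≠ 0) (ht : t ≠ 0) :
    (∀ x x' y y' : G, x ∈ φ s → x' ∈ φ s → x⁻¹ * x' ∈ filterPlus φ s →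
        y ∈ φ t → y' ∈ φ t → y⁻¹ * y' ∈ filterPlus φ t →
        (pcomm x y)⁻¹ * pcomm x' y' ∈ filterPlus φ (s + t)) ∧
    (∀ x x' y : G, x ∈ φ s → x' ∈ φ s → y ∈ φ t →
        (pcomm (x * x') y)⁻¹ * (pcomm x y * pcomm x' y) ∈ filterPlus φ (s + t)) ∧
    (∀ x y y' : G, x ∈ φ s → y ∈ φ t → y' ∈ φ t →
        (pcomm x (y * y'))⁻¹ * (pcomm x y * pcomm x y') ∈ filterPlus φ (s + t)) := by
  

  have hN := filterPlus_normal hφ (s + t)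
  have conjP : ∀ n ∈ filterPlus φ (s + t), ∀ g : G,
      g⁻¹ * n * g ∈ filterPlus φ (s + t) := by
    intro n hn g
    simpa [mul_assoc] using hN.conj_mem n hn g⁻¹
  refine ⟨fun x x' y y' hx hx' ha hy hy' hb => ?_, fun x x' y hx hx' hy => ?_,
    fun x y y' hx hy hy' => ?_⟩
  · -- part (a)
    set a := x⁻¹ * x' with ha'
    set b := y⁻¹ * y' with hb'
    set c := pcomm x y with hc'
    have hcst : c ∈ φ (s + t) := pcomm_mem hφ hx hy
    have hcs : c ∈ φ s := (Subgroup.mem_inf.mp ((hφ.2 s t).2 hcst)).1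
    have hct : c ∈ φ t := (Subgroup.mem_inf.mp ((hφ.2 s t).2 hcst)).2
    have hp1 : pcomm x b ∈ filterPlus φ (s + t) := comm_right_mem hφ hx hb
    have hp2 : pcomm c b ∈ filterPlus φ (s + t) := comm_right_mem hφ hcs hb
    have hp3 : pcomm c a ∈ filterPlus φ (s + t) := by
      rw [← pcomm_inv]; exact inv_mem (comm_left_mem hφ ha hct)
    have hp4 : pcomm a y' ∈ filterPlus φ (s + t) := comm_left_mem hφ ha hy'
    have key : (pcomm x y)⁻¹ * pcomm x' y' =
        ((c⁻¹ * (a⁻¹ * pcomm x b * a) * c) * pcomm c a) * (a⁻¹ * pcomm c b * a)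
          * pcomm a y' := by
      rw [hc', ha', hb']; unfold pcomm; group
    rw [key]
    exact mul_mem (mul_mem (mul_mem (conjP _ (conjP _ hp1 a) c) hp3)
      (conjP _ hp2 a)) hp4
  · -- part (b1)
    have hc : pcomm x' (pcomm x y) ∈ filterPlus φ (s + t) := by
      have h := pcomm_mem hφ hx' (pcomm_mem hφ hx hy)
      rw [add_comm s (s + t)] at h
      exact le_filterPlus φ hs h
    have key : (pcomm (x * x') y)⁻¹ * (pcomm x y * pcomm x' y) =
        (pcomm x' y)⁻¹ * pcomm x' (pcomm x y) * pcomm x' y := by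
      unfold pcomm; group
    rw [key]
    simpa [mul_assoc] using conjP _ hc (pcomm x' y)
  · -- part (b2)
    have hc : pcomm x y ∈ φ (s + t) := pcomm_mem hφ hx hy
    have hcs : pcomm x y ∈ φ s := (Subgroup.mem_inf.mp ((hφ.2 s t).2 hc)).1
    have h1 : pcomm y' (pcomm x y) ∈ filterPlus φ (s + t) := by
      have h := pcomm_mem hφ hy' hc
      rw [add_comm t (s + t)] at h
      exact le_filterPlus φ ht h
    have h2 : pcomm (pcomm x y) (pcomm x y') ∈ filterPlus φ (s + t) := by
      have h := pcomm_mem hφ hcs (pcomm_mem hφ hx hy')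
      rw [add_comm s (s + t)] at h
      exact le_filterPlus φ hs h
    have key : (pcomm x (y * y'))⁻¹ * (pcomm x y * pcomm x y') =
        pcomm y' (pcomm x y) * pcomm (pcomm x y) (pcomm x y') := by
      unfold pcomm; group
    rw [key]
    exact mul_mem h1 h2
end

section
/- Let M be a commutative monoid with a preorder ≼ (reflexive and transitive) that is compatible with addition (s ≼ t and u ≼ v imply s + u ≼ t + v), in which 0 is a minimal element (0 ≼ s for all s), and which satisfies property (★). Let X be a generating set of M such that whenever x ∈ X and y ∈ M with y ≼ x, also y ∈ X. Let G be a group and π a function from X to the normal subgroups of G such that for all s, u ∈ X, s ≼ u implies π_u ≤ π_s. Define π̄_s to be the join over all d ≥ 1 and all sequences (s₁, …, s_d) of elements of X with s₁ + ⋯ + s_d = s of the left-normed iterated commutators [π_{s₁}, …, π_{s_d}]. Then π̄ is order-reversing (s ≼ u implies π̄_u ≤ π̄_s) and for all s, t ∈ M, [π̄_s, π̄_t] ≤ π̄_{s+t} ≤ π̄_s ∩ π̄_t. -/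
/-- Property (★) for a relation `r` on a commutative monoid `M`. -/
def StarProp {M : Type*} [AddCommMonoid M] (r : M → M → Prop) : Prop :=
  ∀ d : ℕ, 1 ≤ d → ∀ (s : M) (u : Fin d → M),
    r s (∑ i, u i) → ∃ f : Fin d → M, (∀ i, r (f i) (u i)) ∧ s = ∑ i, f i

/-- The left-normed iterated commutator `[A₁, …, A_k]` of a list of subgroups
(`⊤` by convention on the empty list). -/
def iteratedCommutator {G : Type*} [Group G] : List (Subgroup G) → Subgroup G
  | [] => ⊤
  | A :: l => l.foldl (fun H K => ⁅H, K⁆) A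

/-- `π̄_s`: the join of the iterated commutators `[π_{s₁}, …, π_{s_d}]` over all nonempty
sequences `(s₁, …, s_d)` of elements of `X` with `s₁ + ⋯ + s_d = s`. -/
def genFilter {G : Type*} [Group G] {M : Type*} [AddCommMonoid M]
    (X : Set M) (π : M → Subgroup G) (s : M) : Subgroup G :=
  ⨆ l ∈ {l : List M | l ≠ [] ∧ (∀ x ∈ l, x ∈ X) ∧ l.sum = s},
    iteratedCommutator (l.map π)

section Aux

variable {G : Type*} [Group G]

lemma normal_iSup_of_normal {ι : Sort*} {N : ι → Subgroup G}
    (h : ∀ i, (N i).Normal) : (⨆ i, N i).Normal := by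
  constructor
  intro n hn g
  refine Subgroup.iSup_induction N (C := fun x => g * x * g⁻¹ ∈ ⨆ i, N i) hn ?_ ?_ ?_
  · intro i x hx
    exact Subgroup.mem_iSup_of_mem i ((h i).conj_mem x hx g)
  · simpa using Subgroup.one_mem _
  · intro x y hx hy
    have hxy : g * (x * y) * g⁻¹ = (g * x * g⁻¹) * (g * y * g⁻¹) := by group
    rw [hxy]; exact mul_mem hx hy

open scoped commutatorElement in
lemma commutator_iSup_le {ι : Sort*} (N : ι → Subgroup G) (K T : Subgroup G)
    (hT : T.Normal) (h : ∀ i, ⁅N i, K⁆ ≤ T) : ⁅⨆ i, N i, K⁆ ≤ T := by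
  rw [Subgroup.commutator_le]
  intro g hg k hk
  let S : Subgroup G :=
  { carrier := {x | ∀ k ∈ K, ⁅x, k⁆ ∈ T}
    one_mem' := by
      intro k hk
      have : ⁅(1 : G), k⁆ = 1 := by simp [commutatorElement_def]
      rw [this]; exact T.one_mem
    mul_mem' := by
      intro a b ha hb k hk
      have hab : ⁅a * b, k⁆ = (a * ⁅b, k⁆ * a⁻¹) * ⁅a, k⁆ := by
        simp only [commutatorElement_def]; group
      rw [hab]
      exact mul_mem (hT.conj_mem _ (hb k hk) a) (ha k hk)
    inv_mem' := by
      intro a ha k hk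
      have hik : ⁅a⁻¹, k⁆ = a⁻¹ * ⁅a, k⁆⁻¹ * (a⁻¹)⁻¹ := by
        simp only [commutatorElement_def]; group
      rw [hik]
      exact hT.conj_mem _ (inv_mem (ha k hk)) a⁻¹ }
  have hS : (⨆ i, N i) ≤ S :=
    iSup_le fun i x hx k hk => (h i) (Subgroup.commutator_mem_commutator hx hk)
  exact hS hg k hk

lemma threeSubgroups {A B C N : Subgroup G} (hN : N.Normal)
    (h1 : ⁅⁅B, C⁆, A⁆ ≤ N) (h2 : ⁅⁅C, A⁆, B⁆ ≤ N) : ⁅⁅A, B⁆, C⁆ ≤ N := by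
  haveI := hN
  have key : ∀ H : Subgroup G, H ≤ N ↔ Subgroup.map (QuotientGroup.mk' N) H = ⊥ := by
    intro H
    rw [Subgroup.map_eq_bot_iff, QuotientGroup.ker_mk']
  rw [key] at h1 h2 ⊢
  rw [Subgroup.map_commutator, Subgroup.map_commutator] at h1 h2 ⊢
  exact Subgroup.commutator_commutator_eq_bot_of_rotate h1 h2

lemma foldl_commutator_mono : ∀ {t₁ t₂ : List (Subgroup G)}, List.Forall₂ (· ≤ ·) t₁ t₂ →
    ∀ {A B : Subgroup G}, A ≤ B →
    t₁.foldl (fun H K => ⁅H, K⁆) A ≤ t₂.foldl (fun H K => ⁅H, K⁆) B := by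
  intro t₁ t₂ ht
  induction ht with
  | nil => intro A B h; exact h
  | cons hCD _ ih => intro A B hAB; exact ih (Subgroup.commutator_mono hAB hCD)

lemma iteratedCommutator_mono {l₁ l₂ : List (Subgroup G)}
    (h : List.Forall₂ (· ≤ ·) l₁ l₂) :
    iteratedCommutator l₁ ≤ iteratedCommutator l₂ := by
  cases h with
  | nil => exact le_rfl
  | cons hAB h => exact foldl_commutator_mono h hAB

lemma iteratedCommutator_normal {l : List (Subgroup G)} (h : ∀ A ∈ l, A.Normal) :
    (iteratedCommutator l).Normal := by
  have main : ∀ (t : List (Subgroup G)), (∀ B ∈ t, B.Normal) → ∀ (A : Subgroup G), A.Normal →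
      (t.foldl (fun H K => ⁅H, K⁆) A).Normal := by
    intro t
    induction t with
    | nil => intro _ A hA; exact hA
    | cons B t ih =>
      intro ht A hA
      haveI := hA; haveI := ht B List.mem_cons_self
      exact ih (fun C hC => ht C (List.mem_cons_of_mem _ hC)) _ (Subgroup.commutator_normal A B)
  cases l with
  | nil => exact (inferInstance : (⊤ : Subgroup G).Normal)
  | cons A l =>
    exact main l (fun B hB => h B (List.mem_cons_of_mem _ hB)) A (h A List.mem_cons_self)

lemma iteratedCommutator_append {l : List (Subgroup G)} (hl : l ≠ []) (A : Subgroup G) :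
    iteratedCommutator (l ++ [A]) = ⁅iteratedCommutator l, A⁆ := by
  obtain ⟨B, l', rfl⟩ := List.exists_cons_of_ne_nil hl
  simp [iteratedCommutator, List.foldl_append]

variable {M : Type*} [AddCommMonoid M]

lemma le_genFilter {X : Set M} {π : M → Subgroup G}
    {l : List M} {s : M} (h1 : l ≠ []) (h2 : ∀ x ∈ l, x ∈ X) (h3 : l.sum = s) :
    iteratedCommutator (l.map π) ≤ genFilter X π s :=
  le_iSup₂ (f := fun (l : List M)
    (_ : l ∈ {l : List M | l ≠ [] ∧ (∀ x ∈ l, x ∈ X) ∧ l.sum = s}) =>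
    iteratedCommutator (l.map π)) l ⟨h1, h2, h3⟩

lemma genFilter_normal {X : Set M} {π : M → Subgroup G}
    (hnorm : ∀ x ∈ X, (π x).Normal) (s : M) : (genFilter X π s).Normal := by
  unfold genFilter
  apply normal_iSup_of_normal
  intro l
  apply normal_iSup_of_normal
  rintro ⟨h1, h2, h3⟩
  apply iteratedCommutator_normal
  intro A hA
  obtain ⟨x, hx, rfl⟩ := List.mem_map.mp hA
  exact hnorm x (h2 x hx)

lemma commutator_genFilter_le {X : Set M} {π : M → Subgroup G}
    {s : M} {K T : Subgroup G} (hT : T.Normal)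
    (h : ∀ l : List M, l ≠ [] → (∀ x ∈ l, x ∈ X) → l.sum = s →
      ⁅iteratedCommutator (l.map π), K⁆ ≤ T) :
    ⁅genFilter X π s, K⁆ ≤ T := by
  unfold genFilter
  apply commutator_iSup_le _ _ _ hT
  intro l
  apply commutator_iSup_le _ _ _ hT
  rintro ⟨h1, h2, h3⟩
  exact h l h1 h2 h3

lemma key_lemma (X : Set M) (π : M → Subgroup G)
    (hnorm : ∀ x ∈ X, (π x).Normal) :
    ∀ n : ℕ, ∀ m : List M, m.length ≤ n → m ≠ [] → (∀ x ∈ m, x ∈ X) →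
    ∀ (l : List M), l ≠ [] → (∀ x ∈ l, x ∈ X) →
      ⁅iteratedCommutator (l.map π), iteratedCommutator (m.map π)⁆ ≤
        genFilter X π (l.sum + m.sum) := by
  intro n
  induction n with
  | zero =>
    intro m hm hne
    rw [Nat.le_zero, List.length_eq_zero_iff] at hm
    exact absurd hm hne
  | succ n ih =>
    intro m hm hne hmX l hlne hlX
    obtain rfl | ⟨m', x, rfl⟩ := m.eq_nil_or_concat
    · exact absurd rfl hne
    simp only [List.concat_eq_append] at hm hne hmX ⊢
    have hxX : x ∈ X := hmX x (by simp)
    have hlmapne : l.map π ≠ [] := by simpa using hlne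
    have hKnormal : (iteratedCommutator (l.map π)).Normal :=
      iteratedCommutator_normal (by
        intro A hA
        obtain ⟨y, hy, rfl⟩ := List.mem_map.mp hA
        exact hnorm y (hlX y hy))
    -- the basic step: appending one element of X to a valid list
    have base : ∀ (l' : List M), l' ≠ [] → (∀ y ∈ l', y ∈ X) →
        ⁅iteratedCommutator (l'.map π), π x⁆ ≤ genFilter X π (l'.sum + x) := by
      intro l' hne' hX'
      have hmapne : l'.map π ≠ [] := by simpa using hne'
      have := iteratedCommutator_append hmapne (π x)
      rw [← this]
      have hmap : (l' ++ [x]).map π = l'.map π ++ [π x] := by simp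
      rw [← hmap]
      exact le_genFilter (by simp) (by
          intro y hy
          rcases List.mem_append.mp hy with h | h
          · exact hX' y h
          · simp at h; subst h; exact hxX) (by simp)
    obtain rfl | hm'ne := eq_or_ne m' []
    · -- base case m = [x]
      simp only [List.nil_append] at hmX ⊢
      have : iteratedCommutator (([x] : List M).map π) = π x := rfl
      rw [this]
      have hsum : ([x] : List M).sum = x := by simp
      rw [hsum]
      exact base l hlne hlX
    · -- inductive step
      have hm'len : m'.length ≤ n := by
        simp only [List.length_append, List.length_singleton] at hm
        omega
      have hm'X : ∀ y ∈ m', y ∈ X := fun y hy => hmX y (by simp [hy])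
      have hm'mapne : m'.map π ≠ [] := by simpa using hm'ne
      have hBnormal : (iteratedCommutator (m'.map π)).Normal :=
        iteratedCommutator_normal (by
          intro A hA
          obtain ⟨y, hy, rfl⟩ := List.mem_map.mp hA
          exact hnorm y (hm'X y hy))
      haveI := hnorm x hxX
      have hmap : (m' ++ [x]).map π = m'.map π ++ [π x] := by simp
      rw [hmap, iteratedCommutator_append hm'mapne (π x)]
      set K := iteratedCommutator (l.map π) with hK
      set B := iteratedCommutator (m'.map π) with hB
      set C := π x with hC
      have hsum : (m' ++ [x]).sum = m'.sum + x := by simp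
      rw [hsum]
      rw [Subgroup.commutator_comm]
      have hN := genFilter_normal (G := G) hnorm (l.sum + (m'.sum + x))
      apply threeSubgroups hN
      · -- ⁅⁅C, K⁆, B⁆ ≤ N
        have h1 : ⁅C, K⁆ ≤ genFilter X π (l.sum + x) := by
          rw [Subgroup.commutator_comm]
          exact base l hlne hlX
        refine le_trans (Subgroup.commutator_mono h1 le_rfl) ?_
        apply commutator_genFilter_le hN
        intro l' hne' hX' hsum'
        have := ih m' hm'len hm'ne hm'X l' hne' hX'
        rw [hsum'] at this
        have heq : l.sum + x + m'.sum = l.sum + (m'.sum + x) := by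
          rw [add_assoc, add_comm x m'.sum]
        rw [heq] at this
        exact this
      · -- ⁅⁅K, B⁆, C⁆ ≤ N
        have h1 : ⁅K, B⁆ ≤ genFilter X π (l.sum + m'.sum) :=
          ih m' hm'len hm'ne hm'X l hlne hlX
        refine le_trans (Subgroup.commutator_mono h1 le_rfl) ?_
        apply commutator_genFilter_le hN
        intro l' hne' hX' hsum'
        have := base l' hne' hX'
        rw [hsum'] at this
        have heq : l.sum + m'.sum + x = l.sum + (m'.sum + x) := by
          rw [add_assoc]
        rw [heq] at this
        exact this

end Aux

/-- Theorem 3 of the paper: under the stated hypotheses `π̄` is an order-reversing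
(pre-ordered) filter. -/
theorem statement10 {M : Type*} [AddCommMonoid M] (r : M → M → Prop)
    (hrefl : ∀ s, r s s) (htrans : ∀ a b c : M, r a b → r b c → r a c)
    (hadd : ∀ a b c d : M, r a b → r c d → r (a + c) (b + d))
    (hzero : ∀ s : M, r 0 s) (hstar : StarProp r)
    {G : Type*} [Group G] (X : Set M) (hgen : AddSubmonoid.closure X = ⊤)
    (hdown : ∀ x ∈ X, ∀ y : M, r y x → y ∈ X)
    (π : M → Subgroup G) (hnorm : ∀ x ∈ X, (π x).Normal)
    (hmono : ∀ s ∈ X, ∀ u ∈ X, r s u → π u ≤ π s) :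
    (∀ s u : M, r s u → genFilter X π u ≤ genFilter X π s) ∧
    (∀ s t : M, ⁅genFilter X π s, genFilter X π t⁆ ≤ genFilter X π (s + t) ∧
      genFilter X π (s + t) ≤ genFilter X π s ⊓ genFilter X π t) := by
  have part1 : ∀ s u : M, r s u → genFilter X π u ≤ genFilter X π s := by
    intro s u hsu
    conv_lhs => rw [genFilter]
    refine iSup₂_le ?_
    rintro l ⟨hlne, hlX, hlsum⟩
    have hd : 1 ≤ l.length := List.length_pos_iff.mpr hlne
    have hsum' : r s (∑ i : Fin l.length, l.get i) := by
      have : (∑ i : Fin l.length, l.get i) = l.sum := by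
        simp [List.get_eq_getElem]
      rw [this, hlsum]; exact hsu
    obtain ⟨f, hf, hs⟩ := hstar l.length hd s (fun i => l.get i) hsum'
    have hfX : ∀ i, f i ∈ X := fun i =>
      hdown (l.get i) (hlX _ (l.get_mem i)) (f i) (hf i)
    have hne' : List.ofFn f ≠ [] := by
      rw [Ne, List.ofFn_eq_nil_iff]
      omega
    have hX' : ∀ y ∈ List.ofFn f, y ∈ X := by
      intro y hy
      obtain ⟨i, rfl⟩ := (List.mem_ofFn (f := f) (a := y)).mp hy
      exact hfX i
    have hsum'' : (List.ofFn f).sum = s := by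
      rw [List.sum_ofFn, hs]
    refine le_trans ?_ (le_genFilter hne' hX' hsum'')
    apply iteratedCommutator_mono
    rw [List.forall₂_iff_get]
    constructor
    · simp
    · intro i h₁ h₂
      simp only [List.length_map] at h₁
      simp only [List.get_eq_getElem, List.getElem_map, List.getElem_ofFn]
      exact hmono _ (hfX _) _ (hlX _ (List.getElem_mem _)) (hf _)
  refine ⟨part1, ?_⟩
  intro s t
  constructor
  · apply commutator_genFilter_le (genFilter_normal hnorm _)
    intro l hlne hlX hlsum
    rw [Subgroup.commutator_comm]
    apply commutator_genFilter_le (genFilter_normal hnorm _)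
    intro m hmne hmX hmsum
    have := key_lemma X π hnorm l.length l le_rfl hlne hlX m hmne hmX
    have heq : m.sum + l.sum = s + t := by rw [hmsum, hlsum, add_comm]
    rw [heq] at this
    exact this
  · have h1 : r s (s + t) := by
      have := hadd s s 0 t (hrefl s) (hzero t)
      simpa using this
    have h2 : r t (s + t) := by
      have := hadd 0 s t t (hzero s) (hrefl t)
      simpa using this
    exact le_inf (part1 s (s + t) h1) (part1 t (s + t) h2)
end
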